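/- Let p ≡ 1 (mod 4) be prime, G_p the Paley graph, and x, y, z ∈ 𝔽_p distinct. Then |(Γ(x) ∩ Γ(y)) \ Γ(z)| ≥ p/8 − 5√p − 1; in particular this set is nonempty whenever p ≥ 1711. -/

import Mathlib

open scoped Classical

/-- `a` is a (nonzero) quadratic residue in `ZMod p`. -/
def IsQR (p : ℕ) (a : ZMod p) : Prop := a ≠ 0 ∧ IsSquare a

/-- The Paley graph on `𝔽_p`: `a ~ b` iff `a - b` is a nonzero quadratic residue.
(The adjacency is stated symmetrically; when `-1` is a residue this agrees with
the usual definition.) -/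
def paley (p : ℕ) : SimpleGraph (ZMod p) where
  Adj a b := a ≠ b ∧ IsSquare (a - b) ∧ IsSquare (b - a)
  symm := by constructor; intro a b h; exact ⟨h.1.symm, h.2.2, h.2.1⟩
  loopless := by constructor; intro a h; exact h.1 rfl

namespace PaleySt

open Polynomial Finset

variable {p : ℕ} [Fact p.Prime]


open Polynomial Finset

variable {p : ℕ} [Fact p.Prime]

lemma pow_half_eq_or (hodd : p % 2 = 1) {u : ZMod p} (hu : u ≠ 0) :
    u ^ (p / 2) = 1 ∨ u ^ (p / 2) = -1 := by
  have h := ZMod.pow_card_sub_one_eq_one hu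
  have h2 : (u ^ (p / 2)) * (u ^ (p / 2)) = 1 := by
    rw [← pow_add]
    have hp2 : 2 ≤ p := (Fact.out : p.Prime).two_le
    have : p / 2 + p / 2 = p - 1 := by omega
    rw [this, h]
  exact mul_self_eq_one_iff.mp h2

lemma card_pow_half_one (hodd : p % 2 = 1) :
    (Finset.univ.filter fun u : ZMod p => u ^ (p / 2) = 1).card = p / 2 := by
  classical
  have hp3 : 3 ≤ p := by
    have := (Fact.out : p.Prime).two_le; omega
  have he1 : 1 ≤ p / 2 := by omega
  set e := p / 2 with he
  have key : ∀ c : ZMod p, c ≠ 0 →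
      (Finset.univ.filter fun u : ZMod p => u ^ e = c).card ≤ e := by
    intro c hc
    have hq : (X ^ e - C c : (ZMod p)[X]) ≠ 0 := by
      intro h
      have := Polynomial.natDegree_X_pow_sub_C (n := e) (r := c)
      rw [h] at this
      simp at this; omega
    have hsub : (Finset.univ.filter fun u : ZMod p => u ^ e = c) ⊆
        (X ^ e - C c : (ZMod p)[X]).roots.toFinset := by
      intro u hu
      simp only [Finset.mem_filter] at hu
      rw [Multiset.mem_toFinset, Polynomial.mem_roots hq]
      simp [Polynomial.IsRoot, hu.2]
    calc (Finset.univ.filter fun u : ZMod p => u ^ e = c).card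
        ≤ (X ^ e - C c : (ZMod p)[X]).roots.toFinset.card := Finset.card_le_card hsub
      _ ≤ Multiset.card (X ^ e - C c : (ZMod p)[X]).roots := Multiset.toFinset_card_le _
      _ ≤ (X ^ e - C c : (ZMod p)[X]).natDegree := Polynomial.card_roots' _
      _ = e := Polynomial.natDegree_X_pow_sub_C
  have hQ := key 1 one_ne_zero
  have hN := key (-1) (by
    simp only [ne_eq, neg_eq_zero]
    exact one_ne_zero)
  -- disjoint union covers nonzero elements
  have hdisj : Disjoint (Finset.univ.filter fun u : ZMod p => u ^ e = 1)
      (Finset.univ.filter fun u : ZMod p => u ^ e = -1) := by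
    rw [Finset.disjoint_left]
    intro u h1 h2
    simp only [Finset.mem_filter] at h1 h2
    have : (1 : ZMod p) = -1 := h1.2.symm.trans h2.2
    have h11 : ((2 : ℕ) : ZMod p) = 0 := by
      push_cast
      linear_combination this
    rw [ZMod.natCast_eq_zero_iff] at h11
    have := Nat.le_of_dvd (by norm_num) h11
    omega
  have hcover : (Finset.univ.filter fun u : ZMod p => u ≠ 0) ⊆
      (Finset.univ.filter fun u : ZMod p => u ^ e = 1) ∪
      (Finset.univ.filter fun u : ZMod p => u ^ e = -1) := by
    intro u hu
    simp only [Finset.mem_filter, Finset.mem_union] at *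
    rcases pow_half_eq_or hodd hu.2 with h | h
    · exact Or.inl ⟨Finset.mem_univ u, h⟩
    · exact Or.inr ⟨Finset.mem_univ u, h⟩
  have hcard0 : (Finset.univ.filter fun u : ZMod p => u ≠ 0).card = p - 1 := by
    rw [Finset.filter_ne']
    rw [Finset.card_erase_of_mem (Finset.mem_univ 0)]
    simp [ZMod.card]
  have := Finset.card_le_card hcover
  rw [hcard0] at this
  have hun := Finset.card_union_le (Finset.univ.filter fun u : ZMod p => u ^ e = 1)
      (Finset.univ.filter fun u : ZMod p => u ^ e = -1)
  omega



open Polynomial Finset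

variable {p : ℕ} [Fact p.Prime]

/-- Transport operator for Hasse derivatives of `f ^ n * c`. -/
noncomputable def Dop (f : (ZMod p)[X]) (n : ℕ) : ℕ → (ZMod p)[X] → (ZMod p)[X]
  | 0, c => c
  | (k+1), c => C (((k:ZMod p)+1))⁻¹ *
      (C (((n - k : ℕ) : ZMod p)) * (derivative f * Dop f n k c) + f * derivative (Dop f n k c))

lemma Dop_add (f : (ZMod p)[X]) (n k : ℕ) (c d : (ZMod p)[X]) :
    Dop f n k (c + d) = Dop f n k c + Dop f n k d := by
  induction k with
  | zero => rfl
  | succ k ih => simp [Dop, ih]; ring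

lemma Dop_smul (f : (ZMod p)[X]) (n k : ℕ) (a : ZMod p) (c : (ZMod p)[X]) :
    Dop f n k (a • c) = a • Dop f n k c := by
  induction k with
  | zero => rfl
  | succ k ih =>
    simp only [Dop, ih]
    simp only [smul_eq_C_mul, derivative_C_mul]
    ring

lemma Dop_zero_poly (f : (ZMod p)[X]) (n k : ℕ) : Dop f n k 0 = 0 := by
  have := Dop_smul f n k 0 0
  simpa using this

lemma Dop_spec (f : (ZMod p)[X]) (n : ℕ) (c : (ZMod p)[X]) :
    ∀ k, k ≤ n → k < p → f ^ (n - k) * Dop f n k c = hasseDeriv k (f ^ n * c) := by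
  intro k
  induction k with
  | zero => intro _ _; simp [Dop, hasseDeriv_zero]
  | succ k ih =>
    intro hkn hkp
    have ih' := ih (by omega) (by omega)
    have hcomp := LinearMap.congr_fun
      (Polynomial.hasseDeriv_comp (R := ZMod p) 1 k) (f ^ n * c)
    simp only [LinearMap.comp_apply, LinearMap.smul_apply] at hcomp
    -- hcomp : hasseDeriv 1 (hasseDeriv k (f^n c)) = (1+k).choose 1 • hasseDeriv (1+k) (f^n c)
    rw [Nat.choose_one_right] at hcomp
    have h1k : 1 + k = k + 1 := by omega
    rw [h1k] at hcomp
    rw [hasseDeriv_one] at hcomp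
    rw [← ih'] at hcomp
    -- hcomp : derivative (f ^ (n-k) * Dop f n k c) = (k+1) • hasseDeriv (k+1) (f^n*c)
    have hnk : n - k = (n - (k+1)) + 1 := by omega
    set D := Dop f n k c with hD
    have hder : derivative (f ^ (n - k) * D) =
        f ^ (n - (k+1)) * (C (((n - k : ℕ) : ZMod p)) * (derivative f * D) + f * derivative D) := by
      rw [derivative_mul, derivative_pow, Nat.sub_sub, hnk, pow_succ]
      ring
    have hne : ((k : ZMod p) + 1) ≠ 0 := by
      have : (((k+1 : ℕ)) : ZMod p) ≠ 0 := by
        rw [Ne, ZMod.natCast_eq_zero_iff]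
        intro hdvd
        have := Nat.le_of_dvd (by omega) hdvd
        omega
      push_cast at this
      exact this
    have hsmul : ((k+1 : ℕ) • hasseDeriv (k+1) (f ^ n * c) : (ZMod p)[X]) =
        C ((k : ZMod p) + 1) * hasseDeriv (k+1) (f ^ n * c) := by
      rw [← Nat.cast_smul_eq_nsmul (ZMod p), smul_eq_C_mul]
      push_cast
      ring_nf
    rw [hsmul] at hcomp
    rw [hder] at hcomp
    -- now : f^(n-(k+1)) * (...) = C (k+1) * hasseDeriv (k+1) (...)
    show f ^ (n - (k+1)) * (C (((k:ZMod p)+1))⁻¹ * _) = _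
    rw [← mul_assoc, mul_comm (f ^ (n - (k+1))) (C (((k:ZMod p)+1))⁻¹), mul_assoc]
    rw [hcomp]
    rw [← mul_assoc, ← C_mul, inv_mul_cancel₀ hne, C_1, one_mul]

lemma Dop_natDegree (f : (ZMod p)[X]) (hf : f.natDegree ≤ 3) (n : ℕ) (c : (ZMod p)[X]) :
    ∀ k, (Dop f n k c).natDegree ≤ c.natDegree + 2 * k := by
  intro k
  induction k with
  | zero => simp [Dop]
  | succ k ih =>
    have hf' : (derivative f).natDegree ≤ 2 := by
      have := natDegree_derivative_le f; omega
    have h1 : (C (((n - k : ℕ) : ZMod p)) * (derivative f * Dop f n k c)).natDegree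
        ≤ c.natDegree + 2 * k + 2 := by
      apply le_trans (natDegree_C_mul_le _ _)
      apply le_trans (natDegree_mul_le)
      omega
    have h2 : (f * derivative (Dop f n k c)).natDegree ≤ c.natDegree + 2 * k + 2 := by
      by_cases hd : derivative (Dop f n k c) = 0
      · rw [hd, mul_zero]; simp
      · apply le_trans (natDegree_mul_le)
        have hDne : (Dop f n k c).natDegree ≥ 1 := by
          by_contra h
          push_neg at h
          have h0 : (Dop f n k c).natDegree = 0 := by omega
          have := natDegree_derivative_le (Dop f n k c)
          rw [h0] at this
          simp at this
          have : derivative (Dop f n k c) = 0 := by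
            have hdeg := Polynomial.natDegree_eq_zero.mp h0
            obtain ⟨a, ha⟩ := hdeg
            rw [← ha]; simp
          exact hd this
        have := natDegree_derivative_le (Dop f n k c)
        omega
    apply le_trans (natDegree_C_mul_le _ _)
    apply le_trans (natDegree_add_le _ _)
    omega

lemma mem_degreeLT_of_natDegree_lt {q : (ZMod p)[X]} {n : ℕ} (h : q.natDegree < n) :
    q ∈ degreeLT (ZMod p) n := by
  rw [Polynomial.mem_degreeLT]
  exact lt_of_le_of_lt Polynomial.degree_le_natDegree (by exact_mod_cast h)

lemma natDegree_le_of_mem_degreeLT {q : (ZMod p)[X]} {n : ℕ}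
    (h : q ∈ degreeLT (ZMod p) (n+1)) : q.natDegree ≤ n := by
  rw [Polynomial.mem_degreeLT] at h
  by_cases hq : q = 0
  · simp [hq]
  · rw [Polynomial.degree_eq_natDegree hq] at h
    exact_mod_cast Nat.lt_succ_iff.mp (by exact_mod_cast h)

set_option maxHeartbeats 1000000 in
lemma exists_aux (f : (ZMod p)[X]) (hf : f.natDegree ≤ 3) (J g m n₁ n₂ : ℕ) (hJ : 1 ≤ J)
    (hdim : m * (J + g) + m * (m - 1) < 2 * (J * (g + 1))) :
    ∃ a b : Fin J → (ZMod p)[X],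
      (∀ j, (a j).natDegree ≤ g) ∧ (∀ j, (b j).natDegree ≤ g) ∧
      (∃ j, a j ≠ 0 ∨ b j ≠ 0) ∧
      ∀ k < m, (∑ j : Fin J, (X:(ZMod p)[X]) ^ (j:ℕ) *
        (Dop f n₁ k (a j) + Dop f n₂ k (b j))) = 0 := by
  classical
  set K := ZMod p
  let D : Submodule K K[X] := degreeLT K (g+1)
  let V := ((Fin J → D) × (Fin J → D))
  let W := ((k : Fin m) → degreeLT K (J + g + 2 * (k:ℕ)))
  have hpsi_mem : ∀ (v : V) (k : Fin m),
      (∑ j : Fin J, (X:K[X]) ^ (j:ℕ) *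
        (Dop f n₁ k ((v.1 j : K[X])) + Dop f n₂ k ((v.2 j : K[X]))))
        ∈ degreeLT K (J + g + 2 * (k:ℕ)) := by
    intro v k
    apply mem_degreeLT_of_natDegree_lt
    have : ∀ j : Fin J, ((X:K[X]) ^ (j:ℕ) *
        (Dop f n₁ k ((v.1 j : K[X])) + Dop f n₂ k ((v.2 j : K[X])))).natDegree
        ≤ (J - 1) + (g + 2 * (k:ℕ)) := by
      intro j
      apply le_trans natDegree_mul_le
      have h1 : (Dop f n₁ (k:ℕ) ((v.1 j : K[X]))).natDegree ≤ g + 2 * (k:ℕ) := by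
        have := Dop_natDegree f hf n₁ ((v.1 j : K[X])) k
        have hd := natDegree_le_of_mem_degreeLT (v.1 j).2
        omega
      have h2 : (Dop f n₂ (k:ℕ) ((v.2 j : K[X]))).natDegree ≤ g + 2 * (k:ℕ) := by
        have := Dop_natDegree f hf n₂ ((v.2 j : K[X])) k
        have hd := natDegree_le_of_mem_degreeLT (v.2 j).2
        omega
      have h3 := natDegree_add_le (Dop f n₁ (k:ℕ) ((v.1 j : K[X])))
        (Dop f n₂ (k:ℕ) ((v.2 j : K[X])))
      have h4 : ((X:K[X]) ^ (j:ℕ)).natDegree = (j:ℕ) := natDegree_X_pow _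
      have h5 : (j:ℕ) ≤ J - 1 := by omega
      omega
    have := Polynomial.natDegree_sum_le_of_forall_le Finset.univ
      (fun j : Fin J => (X:K[X]) ^ (j:ℕ) *
        (Dop f n₁ k ((v.1 j : K[X])) + Dop f n₂ k ((v.2 j : K[X])))) (fun i _ => this i)
    have h6 : (∑ j : Fin J, (X:K[X]) ^ (j:ℕ) *
        (Dop f n₁ k ((v.1 j : K[X])) + Dop f n₂ k ((v.2 j : K[X])))).natDegree
        ≤ J - 1 + (g + 2*(k:ℕ)) := by simpa using this
    omega
  let T : V → W := fun v k => ⟨_, hpsi_mem v k⟩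
  have hlin : IsLinearMap K T := by
    constructor
    · intro u v
      funext k
      apply Subtype.ext
      show (∑ j : Fin J, (X:K[X]) ^ (j:ℕ) *
          (Dop f n₁ k (((u+v).1 j : K[X])) + Dop f n₂ k (((u+v).2 j : K[X]))))
        = (∑ j : Fin J, (X:K[X]) ^ (j:ℕ) *
          (Dop f n₁ k ((u.1 j : K[X])) + Dop f n₂ k ((u.2 j : K[X]))))
        + (∑ j : Fin J, (X:K[X]) ^ (j:ℕ) *
          (Dop f n₁ k ((v.1 j : K[X])) + Dop f n₂ k ((v.2 j : K[X]))))
      rw [← Finset.sum_add_distrib]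
      apply Finset.sum_congr rfl
      intro j _
      have e1 : (((u + v).1 j : K[X])) = (u.1 j : K[X]) + (v.1 j : K[X]) := rfl
      have e2 : (((u + v).2 j : K[X])) = (u.2 j : K[X]) + (v.2 j : K[X]) := rfl
      rw [e1, e2, Dop_add, Dop_add]
      ring
    · intro a v
      funext k
      apply Subtype.ext
      show (∑ j : Fin J, (X:K[X]) ^ (j:ℕ) *
          (Dop f n₁ k (((a • v).1 j : K[X])) + Dop f n₂ k (((a • v).2 j : K[X]))))
        = a • (∑ j : Fin J, (X:K[X]) ^ (j:ℕ) *
          (Dop f n₁ k ((v.1 j : K[X])) + Dop f n₂ k ((v.2 j : K[X]))))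
      rw [Finset.smul_sum]
      apply Finset.sum_congr rfl
      intro j _
      have e1 : (((a • v).1 j : K[X])) = a • (v.1 j : K[X]) := rfl
      have e2 : (((a • v).2 j : K[X])) = a • (v.2 j : K[X]) := rfl
      rw [e1, e2, Dop_smul, Dop_smul, ← smul_add, mul_smul_comm]
  haveI hD : Module.Finite K D := Module.Finite.equiv (degreeLTEquiv K (g+1)).symm
  haveI hW : ∀ k : Fin m, Module.Finite K (degreeLT K (J + g + 2 * (k:ℕ))) :=
    fun k => Module.Finite.equiv (degreeLTEquiv K (J + g + 2 * (k:ℕ))).symm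
  have hrankD : Module.finrank K D = g + 1 := by
    rw [(degreeLTEquiv K (g+1)).finrank_eq, Module.finrank_pi]
    simp
  have hrankV : Module.finrank K V = 2 * (J * (g + 1)) := by
    rw [Module.finrank_prod, Module.finrank_pi_fintype]
    simp only [hrankD, Finset.sum_const, Finset.card_univ, Fintype.card_fin, smul_eq_mul]
    ring
  have hrankW : Module.finrank K W = m * (J + g) + m * (m - 1) := by
    rw [Module.finrank_pi_fintype]
    have : ∀ k : Fin m, Module.finrank K (degreeLT K (J + g + 2 * (k:ℕ)))
        = J + g + 2 * (k:ℕ) := by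
      intro k
      rw [(degreeLTEquiv K _).finrank_eq, Module.finrank_pi]
      simp
    rw [Finset.sum_congr rfl (fun k _ => this k)]
    rw [Finset.sum_add_distrib]
    rw [Finset.sum_const, ← Finset.mul_sum]
    have h1 : ∑ k : Fin m, (k : ℕ) = m * (m-1) / 2 := by
      exact (Fin.sum_univ_eq_sum_range (fun i => i) m).trans (Finset.sum_range_id m)
    have h2 : 2 * (m * (m-1) / 2) = m * (m - 1) := by
      rcases Nat.eq_zero_or_pos m with hm | hm
      · simp [hm]
      · have : Even (m * (m - 1)) := by
          rcases Nat.even_or_odd m with h | h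
          · exact h.mul_right _
          · have : Even (m - 1) := by
              rcases h with ⟨t, ht⟩
              exact ⟨t, by omega⟩
            exact this.mul_left _
        obtain ⟨t, ht⟩ := this
        omega
    rw [h1, h2]
    simp [Finset.card_univ, smul_eq_mul]
  have hnotinj : ¬ Function.Injective (IsLinearMap.mk' T hlin) := by
    intro hinj
    have := LinearMap.finrank_le_finrank_of_injective hinj
    rw [hrankV, hrankW] at this
    exact (not_le.mpr hdim) this
  rw [Function.not_injective_iff] at hnotinj
  obtain ⟨u, v, huv, hne⟩ := hnotinj
  set w := u - v with hw
  have hw0 : w ≠ 0 := sub_ne_zero.mpr hne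
  have hTw : (IsLinearMap.mk' T hlin) w = 0 := by
    rw [hw, map_sub, huv, sub_self]
  refine ⟨fun j => (w.1 j : K[X]), fun j => (w.2 j : K[X]), ?_, ?_, ?_, ?_⟩
  · intro j; exact natDegree_le_of_mem_degreeLT (w.1 j).2
  · intro j; exact natDegree_le_of_mem_degreeLT (w.2 j).2
  · by_contra h
    push_neg at h
    apply hw0
    have h1 : w.1 = 0 := by
      funext j
      have := (h j).1
      exact Subtype.ext (by simpa using this)
    have h2 : w.2 = 0 := by
      funext j
      have := (h j).2
      exact Subtype.ext (by simpa using this)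
    exact Prod.ext_iff.mpr ⟨h1, h2⟩
  · intro k hk
    have := congr_fun hTw ⟨k, hk⟩
    have := Subtype.ext_iff.mp this
    exact this



open Polynomial Finset

variable {p : ℕ} [Fact p.Prime]

/-- Injectivity of evaluation at `X^p` on bivariate polynomials with small coefficients. -/
lemma eval_Xpow_ne_zero (P : Polynomial ((ZMod p)[X]))
    (hco : ∀ n, (P.coeff n).natDegree ≤ p - 2) (hP : P ≠ 0) :
    P.eval ((X : (ZMod p)[X]) ^ p) ≠ 0 := by
  have hp2 : 2 ≤ p := (Fact.out : p.Prime).two_le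
  set n := P.natDegree with hn
  set d := (P.coeff n).natDegree with hd
  have hlead : P.coeff n ≠ 0 := by
    rw [hn, ← leadingCoeff]
    exact leadingCoeff_ne_zero.mpr hP
  intro h0
  have hkey : (P.eval ((X : (ZMod p)[X]) ^ p)).coeff (p * n + d) = (P.coeff n).coeff d := by
    rw [Polynomial.eval_eq_sum_range]
    rw [Polynomial.finset_sum_coeff]
    rw [Finset.sum_eq_single n]
    · rw [← pow_mul, Polynomial.coeff_mul_X_pow']
      simp [Nat.le_add_right]
    · intro i hi hne
      rw [← pow_mul, Polynomial.coeff_mul_X_pow']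
      have hi' : i < n + 1 := Finset.mem_range.mp hi
      have hile : i ≤ n := by omega
      have hlt : i < n := lt_of_le_of_ne hile hne
      have hmul : p * i + p ≤ p * n := by
        calc p * i + p = p * (i+1) := by ring
          _ ≤ p * n := Nat.mul_le_mul_left p hlt
      rw [if_pos (by omega)]
      apply Polynomial.coeff_eq_zero_of_natDegree_lt
      have h1 := hco i
      omega
    · intro hnotin
      exact absurd (Finset.mem_range.mpr (by omega)) hnotin
  have hne : (P.coeff n).coeff d ≠ 0 := by
    rw [hd, ← Polynomial.leadingCoeff]
    exact Polynomial.leadingCoeff_ne_zero.mpr hlead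
  exact hne (by rw [← hkey, h0, Polynomial.coeff_zero])

/-- `eval (X^p) (map C q) = q ^ p` in characteristic `p`. -/
lemma evalXp_map_C (q : (ZMod p)[X]) :
    (q.map (Polynomial.C : ZMod p →+* (ZMod p)[X])).eval ((X : (ZMod p)[X]) ^ p) = q ^ p := by
  induction q using Polynomial.induction_on' with
  | add f g hf hg =>
    rw [Polynomial.map_add, Polynomial.eval_add, hf, hg, add_pow_char]
  | monomial i a =>
    rw [Polynomial.map_monomial]
    rw [← Polynomial.C_mul_X_pow_eq_monomial, ← Polynomial.C_mul_X_pow_eq_monomial]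
    rw [Polynomial.eval_mul, Polynomial.eval_pow, Polynomial.eval_C, Polynomial.eval_X]
    rw [mul_pow, ← Polynomial.C_pow, ZMod.pow_card, ← pow_mul, ← pow_mul, mul_comm p i]

/-- `eval (C t) (map C q) = C (q.eval t)`. -/
lemma evalCt_map_C (q : (ZMod p)[X]) (t : ZMod p) :
    (q.map (Polynomial.C : ZMod p →+* (ZMod p)[X])).eval (Polynomial.C t)
      = Polynomial.C (q.eval t) := by
  induction q using Polynomial.induction_on' with
  | add f g hf hg =>
    rw [Polynomial.map_add, Polynomial.eval_add, hf, hg, Polynomial.eval_add, map_add]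
  | monomial i a =>
    rw [Polynomial.map_monomial]
    rw [← Polynomial.C_mul_X_pow_eq_monomial, ← Polynomial.C_mul_X_pow_eq_monomial]
    rw [Polynomial.eval_mul, Polynomial.eval_pow, Polynomial.eval_C, Polynomial.eval_X,
      Polynomial.eval_mul, Polynomial.eval_pow, Polynomial.eval_C, Polynomial.eval_X,
      ← Polynomial.C_pow, ← Polynomial.C_mul]

/-- Parity-of-multiplicity argument. -/
lemma parity_aux (c : ZMod p) (hc : c ≠ 0) (R : Finset (ZMod p)) {r₀ : ZMod p} (hr₀ : r₀ ∈ R)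
    (u : ZMod p) (hu : u ≠ 0) (A B : (ZMod p)[X])
    (h : (Polynomial.C c * ∏ r ∈ R, (X - Polynomial.C r)) * A^2 = Polynomial.C u * B^2) :
    A = 0 ∧ B = 0 := by
  classical
  set f : (ZMod p)[X] := Polynomial.C c * ∏ r ∈ R, (X - Polynomial.C r) with hfdef
  have hf0 : f ≠ 0 := by
    apply mul_ne_zero (Polynomial.C_ne_zero.mpr hc)
    rw [Finset.prod_ne_zero_iff]
    exact fun r _ => Polynomial.X_sub_C_ne_zero r
  by_cases hA : A = 0
  · refine ⟨hA, ?_⟩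
    rw [hA] at h
    have : Polynomial.C u * B^2 = 0 := by rw [← h]; ring
    rcases mul_eq_zero.mp this with h' | h'
    · exact absurd h' (Polynomial.C_ne_zero.mpr hu)
    · exact pow_eq_zero_iff (n := 2) (by norm_num) |>.mp h'
  · exfalso
    have hB : B ≠ 0 := by
      intro hB
      rw [hB] at h
      have : f * A ^ 2 = 0 := by rw [h]; ring
      rcases mul_eq_zero.mp this with h' | h'
      · exact hf0 h'
      · exact hA (pow_eq_zero_iff (n := 2) (by norm_num) |>.mp h')
    have hLne : f * A^2 ≠ 0 := by
      apply mul_ne_zero hf0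
      exact pow_ne_zero _ hA
    have hRne : Polynomial.C u * B^2 ≠ 0 := by
      apply mul_ne_zero (Polynomial.C_ne_zero.mpr hu)
      exact pow_ne_zero _ hB
    have hprodne : (∏ r ∈ R, (X - Polynomial.C r) : (ZMod p)[X]) ≠ 0 := by
      rw [Finset.prod_ne_zero_iff]
      exact fun r _ => Polynomial.X_sub_C_ne_zero r
    have hrmf : rootMultiplicity r₀ f = 1 := by
      rw [hfdef, Polynomial.rootMultiplicity_mul
        (mul_ne_zero (Polynomial.C_ne_zero.mpr hc) hprodne)]
      rw [Polynomial.rootMultiplicity_eq_zero (by simp [Polynomial.IsRoot, hc])]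
      rw [← Polynomial.count_roots, Polynomial.roots_prod_X_sub_C,
        Multiset.count_eq_one_of_mem R.nodup hr₀]
    have hA2 : rootMultiplicity r₀ (A^2) = 2 * rootMultiplicity r₀ A := by
      rw [sq, Polynomial.rootMultiplicity_mul (mul_ne_zero hA hA)]
      ring
    have hB2 : rootMultiplicity r₀ (B^2) = 2 * rootMultiplicity r₀ B := by
      rw [sq, Polynomial.rootMultiplicity_mul (mul_ne_zero hB hB)]
      ring
    have hcu : rootMultiplicity r₀ (Polynomial.C u) = 0 :=
      Polynomial.rootMultiplicity_eq_zero (by simp [Polynomial.IsRoot, hu])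
    have hcongr := congrArg (rootMultiplicity r₀) h
    rw [Polynomial.rootMultiplicity_mul hLne, Polynomial.rootMultiplicity_mul hRne,
      hrmf, hA2, hB2, hcu] at hcongr
    omega



open Polynomial Finset

variable {p : ℕ} [Fact p.Prime]

/-- decomposition of `(X^p + C s)^n`. -/
lemma pow_Xp_add_C (s : ZMod p) (n : ℕ) :
    ∃ Err : (ZMod p)[X], ((X:(ZMod p)[X])^p + C s)^n = C (s^n) + X^p * Err := by
  induction n with
  | zero => exact ⟨0, by simp⟩
  | succ n ih =>
    obtain ⟨E, hE⟩ := ih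
    refine ⟨C (s^n) + X^p * E + C s * E, ?_⟩
    rw [pow_succ, hE, pow_succ, Polynomial.C_mul]
    ring

lemma taylor_pow' (s : ZMod p) (q : (ZMod p)[X]) (n : ℕ) :
    taylor s (q ^ n) = (taylor s q) ^ n := by
  induction n with
  | zero => simp
  | succ n ih => rw [pow_succ, taylor_mul, ih, pow_succ]

/-- Vanishing of low taylor coefficients of `Φ` at points of `S`. -/
lemma Phi_vanish (f : (ZMod p)[X]) (m e J : ℕ) (hmp : m < p) (a b : Fin J → (ZMod p)[X])
    (hpsi : ∀ k < m, (∑ j : Fin J, (X:(ZMod p)[X])^(j:ℕ) *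
        (Dop f m k (a j) + Dop f (m+e) k (b j))) = 0)
    (s : ZMod p) (hs : f.eval s ^ e = 1) :
    ∀ k < m, (taylor s (∑ j : Fin J, (X:(ZMod p)[X])^(p*(j:ℕ)) *
        (f^m * a j + f^(m+e) * b j))).coeff k = 0 := by
  intro k hk
  have hkp : k < p := lt_trans hk hmp
  have hXsp : ((X:(ZMod p)[X]) + C s)^p = X^p + C s := by
    rw [add_pow_char, ← map_pow, ZMod.pow_card]
  have htay : taylor s (∑ j : Fin J, (X:(ZMod p)[X])^(p*(j:ℕ)) *
      (f^m * a j + f^(m+e) * b j)) =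
      ∑ j : Fin J, ((X:(ZMod p)[X])^p + C s)^(j:ℕ) *
        taylor s (f^m * a j + f^(m+e) * b j) := by
    rw [map_sum]
    apply Finset.sum_congr rfl
    intro j _
    rw [taylor_mul, taylor_pow', taylor_X, pow_mul, hXsp]
  rw [htay, finset_sum_coeff]
  have hterm : ∀ j : Fin J,
      (((X:(ZMod p)[X])^p + C s)^(j:ℕ) * taylor s (f^m * a j + f^(m+e) * b j)).coeff k
      = f.eval s ^ (m - k) * (s^(j:ℕ) *
          ((Dop f m k (a j)).eval s + (Dop f (m+e) k (b j)).eval s)) := by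
    intro j
    obtain ⟨E, hE⟩ := pow_Xp_add_C s (j:ℕ)
    rw [hE]
    have hsplit : (C (s^(j:ℕ)) + X^p * E) * taylor s (f^m * a j + f^(m+e) * b j)
        = C (s^(j:ℕ)) * taylor s (f^m * a j + f^(m+e) * b j)
          + (E * taylor s (f^m * a j + f^(m+e) * b j)) * X^p := by ring
    rw [hsplit, Polynomial.coeff_add, Polynomial.coeff_mul_X_pow', if_neg (by omega),
      add_zero, Polynomial.coeff_C_mul]
    rw [Polynomial.taylor_coeff]
    rw [map_add (hasseDeriv k)]
    rw [← Dop_spec f m (a j) k (le_of_lt hk) hkp,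
        ← Dop_spec f (m+e) (b j) k (by omega) hkp]
    rw [Polynomial.eval_add, Polynomial.eval_mul, Polynomial.eval_mul,
      Polynomial.eval_pow, Polynomial.eval_pow]
    have hme : m + e - k = (m - k) + e := by omega
    rw [hme, pow_add, hs, mul_one]
    ring
  rw [Finset.sum_congr rfl (fun j _ => hterm j)]
  rw [← Finset.mul_sum]
  have : ∑ j : Fin J, s^(j:ℕ) *
      ((Dop f m k (a j)).eval s + (Dop f (m+e) k (b j)).eval s)
      = Polynomial.eval s (∑ j : Fin J, (X:(ZMod p)[X])^(j:ℕ) *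
          (Dop f m k (a j) + Dop f (m+e) k (b j))) := by
    rw [Polynomial.eval_finset_sum]
    apply Finset.sum_congr rfl
    intro j _
    rw [Polynomial.eval_mul, Polynomial.eval_pow, Polynomial.eval_X, Polynomial.eval_add]
  rw [this, hpsi k hk, Polynomial.eval_zero, mul_zero]



open Polynomial Finset

variable {p : ℕ} [Fact p.Prime]

/-- coefficient extraction for the bivariate lift -/
lemma Atil_coeff {J : ℕ} (a : Fin J → (ZMod p)[X]) (j : Fin J) :
    (∑ j' : Fin J, Polynomial.C (a j') * (X : Polynomial ((ZMod p)[X]))^(j':ℕ)).coeff (j:ℕ)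
      = a j := by
  classical
  rw [Polynomial.finset_sum_coeff]
  rw [Finset.sum_eq_single j]
  · rw [Polynomial.coeff_C_mul, Polynomial.coeff_X_pow, if_pos rfl, mul_one]
  · intro j' _ hne
    rw [Polynomial.coeff_C_mul, Polynomial.coeff_X_pow,
      if_neg (fun h => hne (Fin.ext h.symm)), mul_zero]
  · intro h; exact absurd (Finset.mem_univ j) h

lemma Atil_coeff_natDegree {J g : ℕ} (a : Fin J → (ZMod p)[X])
    (ha : ∀ j, (a j).natDegree ≤ g) (n : ℕ) :
    ((∑ j' : Fin J, Polynomial.C (a j') * (X : Polynomial ((ZMod p)[X]))^(j':ℕ)).coeff n).natDegree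
      ≤ g := by
  classical
  rw [Polynomial.finset_sum_coeff]
  apply Polynomial.natDegree_sum_le_of_forall_le
  intro j _
  rw [Polynomial.coeff_C_mul, Polynomial.coeff_X_pow]
  split_ifs with h
  · rw [mul_one]; exact ha j
  · rw [mul_zero]; simp

lemma Atil_sq_coeff_natDegree {J g : ℕ} (a : Fin J → (ZMod p)[X])
    (ha : ∀ j, (a j).natDegree ≤ g) (n : ℕ) :
    (((∑ j' : Fin J, Polynomial.C (a j') * (X : Polynomial ((ZMod p)[X]))^(j':ℕ))^2).coeff
      n).natDegree ≤ 2 * g := by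
  classical
  rw [sq, Polynomial.coeff_mul]
  apply Polynomial.natDegree_sum_le_of_forall_le
  intro x _
  apply le_trans (Polynomial.natDegree_mul_le)
  have h1 := Atil_coeff_natDegree a ha x.1
  have h2 := Atil_coeff_natDegree a ha x.2
  omega

lemma Atil_natDegree {J : ℕ} (a : Fin J → (ZMod p)[X]) :
    (∑ j' : Fin J, Polynomial.C (a j') * (X : Polynomial ((ZMod p)[X]))^(j':ℕ)).natDegree
      ≤ J - 1 := by
  apply Polynomial.natDegree_sum_le_of_forall_le
  intro j _
  apply le_trans (Polynomial.natDegree_mul_le)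
  have := Polynomial.natDegree_X_pow (R := (ZMod p)[X]) (j:ℕ)
  have hj : (j:ℕ) ≤ J - 1 := by omega
  simp [Polynomial.natDegree_C]
  omega

set_option maxHeartbeats 1600000 in
/-- Nonvanishing of the Stepanov auxiliary polynomial. -/
lemma Phi_ne_zero (c : ZMod p) (hc : c ≠ 0) (R : Finset (ZMod p)) (hRne : R.Nonempty)
    (hR3 : R.card ≤ 3) (m e g J : ℕ) (h2e : 2*e + 1 = p) (hg : 2*g + 3 ≤ p - 2)
    (hJ1 : 1 ≤ J) (hJp : J ≤ p - 3)
    (a b : Fin J → (ZMod p)[X])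
    (hadeg : ∀ j, (a j).natDegree ≤ g) (hbdeg : ∀ j, (b j).natDegree ≤ g)
    (hne : ∃ j, a j ≠ 0 ∨ b j ≠ 0) :
    (∑ j : Fin J, (X:(ZMod p)[X])^(p*(j:ℕ)) *
      ((Polynomial.C c * ∏ r ∈ R, (X - Polynomial.C r))^m * a j
        + (Polynomial.C c * ∏ r ∈ R, (X - Polynomial.C r))^(m+e) * b j)) ≠ 0 := by
  classical
  set f : (ZMod p)[X] := Polynomial.C c * ∏ r ∈ R, (X - Polynomial.C r) with hfdef
  have hf0 : f ≠ 0 := by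
    apply mul_ne_zero (Polynomial.C_ne_zero.mpr hc)
    rw [Finset.prod_ne_zero_iff]
    exact fun r _ => Polynomial.X_sub_C_ne_zero r
  intro hPhi
  set 𝒜 : (ZMod p)[X] := ∑ j : Fin J, a j * X^(p*(j:ℕ)) with hAdef
  set ℬ : (ZMod p)[X] := ∑ j : Fin J, b j * X^(p*(j:ℕ)) with hBdef
  have hsplit : (∑ j : Fin J, (X:(ZMod p)[X])^(p*(j:ℕ)) * (f^m * a j + f^(m+e) * b j))
      = f^m * (𝒜 + f^e * ℬ) := by
    rw [hAdef, hBdef, mul_add]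
    simp only [Finset.mul_sum]
    rw [← Finset.sum_add_distrib]
    apply Finset.sum_congr rfl
    intro j _
    ring
  rw [hsplit] at hPhi
  have h0 : 𝒜 + f^e * ℬ = 0 := by
    rcases mul_eq_zero.mp hPhi with h | h
    · exact absurd h (pow_ne_zero _ hf0)
    · exact h
  have hkey : f * 𝒜^2 = f^p * ℬ^2 := by
    have hA : 𝒜 = -(f^e * ℬ) := by linear_combination h0
    have hp' : f^p = f^(2*e+1) := by rw [h2e]
    rw [hA, hp']
    ring
  -- bivariate lift
  set Atil : Polynomial ((ZMod p)[X]) :=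
    ∑ j' : Fin J, Polynomial.C (a j') * (X : Polynomial ((ZMod p)[X]))^(j':ℕ) with hAtdef
  set Btil : Polynomial ((ZMod p)[X]) :=
    ∑ j' : Fin J, Polynomial.C (b j') * (X : Polynomial ((ZMod p)[X]))^(j':ℕ) with hBtdef
  have hevA : Atil.eval ((X:(ZMod p)[X])^p) = 𝒜 := by
    rw [hAtdef, Polynomial.eval_finset_sum]
    apply Finset.sum_congr rfl
    intro j _
    rw [Polynomial.eval_mul, Polynomial.eval_C, Polynomial.eval_pow, Polynomial.eval_X,
      ← pow_mul]
  have hevB : Btil.eval ((X:(ZMod p)[X])^p) = ℬ := by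
    rw [hBtdef, Polynomial.eval_finset_sum]
    apply Finset.sum_congr rfl
    intro j _
    rw [Polynomial.eval_mul, Polynomial.eval_C, Polynomial.eval_pow, Polynomial.eval_X,
      ← pow_mul]
  set P : Polynomial ((ZMod p)[X]) :=
    Polynomial.C f * Atil^2 - (f.map (Polynomial.C : ZMod p →+* (ZMod p)[X])) * Btil^2
    with hPdef
  have hPev : P.eval ((X:(ZMod p)[X])^p) = 0 := by
    rw [hPdef, Polynomial.eval_sub, Polynomial.eval_mul, Polynomial.eval_mul,
      Polynomial.eval_pow, Polynomial.eval_pow, Polynomial.eval_C, hevA, hevB, evalXp_map_C]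
    rw [sub_eq_zero]
    exact hkey
  have hfdeg : f.natDegree ≤ 3 := by
    apply le_trans (Polynomial.natDegree_C_mul_le _ _)
    have : (∏ r ∈ R, (X - Polynomial.C r) : (ZMod p)[X]).natDegree = R.card := by
      rw [Polynomial.natDegree_prod _ _ (fun r _ => Polynomial.X_sub_C_ne_zero r)]
      simp [Polynomial.natDegree_X_sub_C]
    omega
  have hPco : ∀ n, (P.coeff n).natDegree ≤ p - 2 := by
    intro n
    rw [hPdef, Polynomial.coeff_sub]
    apply le_trans (Polynomial.natDegree_sub_le _ _)
    have h1 : ((Polynomial.C f * Atil^2).coeff n).natDegree ≤ p - 2 := by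
      rw [Polynomial.coeff_C_mul]
      apply le_trans (Polynomial.natDegree_mul_le)
      have := Atil_sq_coeff_natDegree a hadeg n
      rw [← hAtdef] at this
      omega
    have h2 : (((f.map (Polynomial.C : ZMod p →+* (ZMod p)[X])) * Btil^2).coeff n).natDegree
        ≤ p - 2 := by
      rw [Polynomial.coeff_mul]
      apply Polynomial.natDegree_sum_le_of_forall_le
      intro x _
      apply le_trans (Polynomial.natDegree_mul_le)
      rw [Polynomial.coeff_map]
      have := Atil_sq_coeff_natDegree b hbdeg x.2
      rw [← hBtdef] at this
      have hC : (Polynomial.C (f.coeff x.1) : (ZMod p)[X]).natDegree = 0 :=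
        Polynomial.natDegree_C _
      omega
    omega
  have hP0 : P = 0 := by
    by_contra h
    exact eval_Xpow_ne_zero P hPco h hPev
  have hPz : Polynomial.C f * Atil^2
      = (f.map (Polynomial.C : ZMod p →+* (ZMod p)[X])) * Btil^2 := by
    apply sub_eq_zero.mp
    rw [← hPdef, hP0]
  -- evaluate at C t for t ∉ R
  have hzero : ∀ t : ZMod p, t ∉ R →
      Atil.eval (Polynomial.C t) = 0 ∧ Btil.eval (Polynomial.C t) = 0 := by
    intro t ht
    have hft : f.eval t ≠ 0 := by
      rw [hfdef, Polynomial.eval_mul, Polynomial.eval_C, Polynomial.eval_prod]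
      apply mul_ne_zero hc
      rw [Finset.prod_ne_zero_iff]
      intro r hr
      rw [Polynomial.eval_sub, Polynomial.eval_X, Polynomial.eval_C, sub_ne_zero]
      exact fun h => ht (h ▸ hr)
    have hev := congrArg (Polynomial.eval (Polynomial.C t)) hPz
    rw [Polynomial.eval_mul, Polynomial.eval_mul, Polynomial.eval_pow, Polynomial.eval_pow,
      Polynomial.eval_C, evalCt_map_C] at hev
    exact parity_aux c hc R hRne.choose_spec (f.eval t) hft _ _ (by rw [← hfdef]; exact hev)
  obtain ⟨j₀, hj₀⟩ := hne
  have hcard : ∀ (Ctil : Polynomial ((ZMod p)[X])), Ctil.natDegree ≤ J - 1 →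
      (∀ t : ZMod p, t ∉ R → Ctil.eval (Polynomial.C t) = 0) → Ctil = 0 := by
    intro Ctil hdeg hz
    by_contra hC0
    have hsub : (Finset.univ \ R).image (Polynomial.C : ZMod p → (ZMod p)[X])
        ⊆ Ctil.roots.toFinset := by
      intro w hw
      obtain ⟨t, ht, rfl⟩ := Finset.mem_image.mp hw
      rw [Multiset.mem_toFinset, Polynomial.mem_roots hC0]
      exact hz t (Finset.mem_sdiff.mp ht).2
    have h1 : ((Finset.univ \ R).image (Polynomial.C : ZMod p → (ZMod p)[X])).card
        = p - R.card := by
      rw [Finset.card_image_of_injective _ Polynomial.C_injective,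
        Finset.card_sdiff_of_subset (Finset.subset_univ R), Finset.card_univ, ZMod.card]
    have h2 := Finset.card_le_card hsub
    have h3 := Multiset.toFinset_card_le Ctil.roots
    have h4 := Polynomial.card_roots' Ctil
    omega
  have hAtil0 : Atil = 0 := hcard Atil (Atil_natDegree a) (fun t ht => (hzero t ht).1)
  have hBtil0 : Btil = 0 := hcard Btil (Atil_natDegree b) (fun t ht => (hzero t ht).2)
  rcases hj₀ with h | h
  · apply h
    rw [← Atil_coeff a j₀, ← hAtdef, hAtil0, Polynomial.coeff_zero]
  · apply h
    rw [← Atil_coeff b j₀, ← hBtdef, hBtil0, Polynomial.coeff_zero]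


set_option maxHeartbeats 1600000 in
/-- Main Stepanov-type bound. -/
lemma stepanov_main (hp : 1616 ≤ p) (hodd : p % 2 = 1)
    (c : ZMod p) (hc : c ≠ 0) (R : Finset (ZMod p)) (hR1 : 1 ≤ R.card) (hR3 : R.card ≤ 3) :
    (Finset.univ.filter fun v : ZMod p =>
        (Polynomial.C c * ∏ r ∈ R, (X - Polynomial.C r)).eval v ^ (p/2) = 1).card
      * (2 * (Nat.sqrt p / 3))
    ≤ p * (Nat.sqrt p / 3) + 3 * (2 * (Nat.sqrt p / 3) + p/2) + (p-5)/2 := by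
  classical
  have hp2 : 2 ≤ p := (Fact.out : p.Prime).two_le
  set s := Nat.sqrt p with hsdef
  set J1 := s / 3 with hJ1def
  set J := J1 + 1 with hJdef
  set m := 2 * J1 with hmdef
  set e := p / 2 with hedef
  set g := (p - 5) / 2 with hgdef
  set f : (ZMod p)[X] := Polynomial.C c * ∏ r ∈ R, (X - Polynomial.C r) with hfdef
  have hs40 : 40 ≤ s := Nat.le_sqrt.mpr (by omega)
  have hss : s * s ≤ p := by
    have := Nat.sqrt_le' p
    rw [pow_two] at this
    exact this
  have h40s : 40 * s ≤ s * s := Nat.mul_le_mul_right s hs40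
  have hJ1ge : 13 ≤ J1 := by omega
  have h3J1 : 3 * J1 ≤ s := by omega
  have h9 : 9 * (J1 * J1) ≤ p := by
    calc 9 * (J1 * J1) = (3 * J1) * (3 * J1) := by ring
      _ ≤ s * s := Nat.mul_le_mul h3J1 h3J1
      _ ≤ p := hss
  have ht169 : 169 ≤ J1 * J1 := Nat.mul_le_mul hJ1ge hJ1ge
  have h2e : 2 * e + 1 = p := by omega
  have hgp : 2 * g + 5 = p := by omega
  have hf0 : f ≠ 0 := by
    apply mul_ne_zero (Polynomial.C_ne_zero.mpr hc)
    rw [Finset.prod_ne_zero_iff]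
    exact fun r _ => Polynomial.X_sub_C_ne_zero r
  have hfdeg : f.natDegree ≤ 3 := by
    apply le_trans (Polynomial.natDegree_C_mul_le _ _)
    have : (∏ r ∈ R, (X - Polynomial.C r) : (ZMod p)[X]).natDegree = R.card := by
      rw [Polynomial.natDegree_prod _ _ (fun r _ => Polynomial.X_sub_C_ne_zero r)]
      simp [Polynomial.natDegree_X_sub_C]
    omega
  have hdim : m * (J + g) + m * (m - 1) < 2 * (J * (g + 1)) := by
    have hidL : m * (J + g) + m * (m - 1) = 6 * (J1 * J1) + 2 * (J1 * g) := by
      rw [hmdef, hJdef]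
      zify [show (1:ℕ) ≤ 2 * J1 by omega]
      ring
    have hidR : 2 * (J * (g + 1)) = 2 * (J1 * g) + 2 * J1 + 2 * g + 2 := by
      rw [hJdef]; ring
    omega
  obtain ⟨a, b, hadeg, hbdeg, hne, hpsi⟩ :=
    exists_aux f hfdeg J g m m (m + e) (by omega) hdim
  set Φ : (ZMod p)[X] := ∑ j : Fin J, (X:(ZMod p)[X])^(p*(j:ℕ)) *
      (f^m * a j + f^(m+e) * b j) with hPhidef
  have hΦne : Φ ≠ 0 := by
    rw [hPhidef, hfdef]
    exact Phi_ne_zero c hc R (Finset.card_pos.mp (by omega)) hR3 m e g J h2e (by omega)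
      (by omega) (by omega) a b hadeg hbdeg hne
  set S := Finset.univ.filter (fun v : ZMod p => f.eval v ^ e = 1) with hSdef
  have hdvd_each : ∀ v ∈ S, (X - Polynomial.C v)^m ∣ Φ := by
    intro v hv
    have hv2 : f.eval v ^ e = 1 := (Finset.mem_filter.mp hv).2
    have hvan := Phi_vanish f m e J (by omega) a b hpsi v hv2
    have hXdvd : (X:(ZMod p)[X])^m ∣ taylor v Φ :=
      Polynomial.X_pow_dvd_iff.mpr (fun d hd => hvan d hd)
    obtain ⟨Q, hQ⟩ := hXdvd
    refine ⟨taylor (-v) Q, ?_⟩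
    have h1 : taylor (-v) (taylor v Φ) = Φ := by
      rw [Polynomial.taylor_taylor]
      rw [neg_add_cancel]
      exact Polynomial.taylor_zero Φ
    calc Φ = taylor (-v) (taylor v Φ) := h1.symm
      _ = taylor (-v) ((X:(ZMod p)[X])^m * Q) := by rw [hQ]
      _ = (X - Polynomial.C v)^m * taylor (-v) Q := by
          rw [Polynomial.taylor_mul, taylor_pow', Polynomial.taylor_X, Polynomial.C_neg,
            ← sub_eq_add_neg]
  have hprod : (∏ v ∈ S, (X - Polynomial.C v)^m) ∣ Φ := by
    apply Finset.prod_dvd_of_coprime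
    · intro x _ y _ hxy
      exact (Polynomial.pairwise_coprime_X_sub_C Function.injective_id hxy).pow
    · exact hdvd_each
  have hproddeg : (∏ v ∈ S, (X - Polynomial.C v)^m).natDegree = S.card * m := by
    rw [Polynomial.natDegree_prod _ _
      (fun v _ => pow_ne_zero _ (Polynomial.X_sub_C_ne_zero v))]
    have : ∀ v ∈ S, ((X - Polynomial.C v)^m).natDegree = m := by
      intro v _
      rw [Polynomial.natDegree_pow, Polynomial.natDegree_X_sub_C, mul_one]
    rw [Finset.sum_congr rfl this, Finset.sum_const, smul_eq_mul]
  have hPhideg : Φ.natDegree ≤ p * J1 + (3*(m+e) + g) := by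
    rw [hPhidef]
    apply Polynomial.natDegree_sum_le_of_forall_le
    intro j _
    apply le_trans (Polynomial.natDegree_mul_le)
    have hXp : ((X:(ZMod p)[X])^(p*(j:ℕ))).natDegree = p*(j:ℕ) := Polynomial.natDegree_X_pow _
    have hj : (j:ℕ) ≤ J1 := by omega
    have hXple : p*(j:ℕ) ≤ p * J1 := Nat.mul_le_mul_left p hj
    have hblock : (f^m * a j + f^(m+e) * b j).natDegree ≤ 3*(m+e) + g := by
      apply le_trans (Polynomial.natDegree_add_le _ _)
      have h1 : (f^m * a j).natDegree ≤ 3*(m+e) + g := by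
        apply le_trans (Polynomial.natDegree_mul_le)
        have := Polynomial.natDegree_pow_le (p := f) (n := m)
        have := hadeg j
        nlinarith [Polynomial.natDegree_pow_le (p := f) (n := m), hfdeg]
      have h2 : (f^(m+e) * b j).natDegree ≤ 3*(m+e) + g := by
        apply le_trans (Polynomial.natDegree_mul_le)
        have h3 := Polynomial.natDegree_pow_le (p := f) (n := m+e)
        have h4 := hbdeg j
        nlinarith [hfdeg]
      omega
    omega
  have hfinal := Polynomial.natDegree_le_of_dvd hprod hΦne
  rw [hproddeg] at hfinal
  calc S.card * m ≤ Φ.natDegree := hfinal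
    _ ≤ p * J1 + (3*(m+e) + g) := hPhideg
    _ = p * J1 + 3*(m+e) + g := by ring


open Polynomial Finset

variable {p : ℕ} [Fact p.Prime]

lemma cnt_le_real (hp : 1616 ≤ p) (hodd : p % 2 = 1)
    (c : ZMod p) (hc : c ≠ 0) (R : Finset (ZMod p)) (hR1 : 1 ≤ R.card) (hR3 : R.card ≤ 3) :
    ((Finset.univ.filter fun v : ZMod p =>
        (Polynomial.C c * ∏ r ∈ R, (X - Polynomial.C r)).eval v ^ (p/2) = 1).card : ℝ)
      ≤ p/2 + 5 * Real.sqrt p - 10 := by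
  have hkey := stepanov_main hp hodd c hc R hR1 hR3
  set N := (Finset.univ.filter fun v : ZMod p =>
        (Polynomial.C c * ∏ r ∈ R, (X - Polynomial.C r)).eval v ^ (p/2) = 1).card with hN
  set s := Nat.sqrt p with hs
  set J1 := s / 3 with hJ1
  have hs40 : 40 ≤ s := Nat.le_sqrt.mpr (by omega)
  have hss : s * s ≤ p := by
    have := Nat.sqrt_le' p; rw [pow_two] at this; exact this
  have hps : p < (s+1) * (s+1) := by
    have := Nat.lt_succ_sqrt' p
    rw [pow_two] at this
    exact this
  have hJ1ge : 13 ≤ J1 := by omega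
  have h3J1 : s ≤ 3 * J1 + 2 := by omega
  have hnat : N * (2 * J1) + 4 ≤ p * J1 + 6 * J1 + 2 * p := by
    have h1 : 3 * (2 * J1 + p / 2) + (p-5)/2 = 6 * J1 + (2 * p - 4) := by omega
    omega
  have hsr : (s : ℝ) ≤ Real.sqrt p := by
    rw [show ((s:ℝ)) = Real.sqrt ((s:ℝ)^2) by rw [Real.sqrt_sq (by positivity)]]
    apply Real.sqrt_le_sqrt
    push_cast
    rw [pow_two]
    exact_mod_cast hss
  have hJ1pos : (0:ℝ) < (J1:ℝ) := by exact_mod_cast (show 0 < J1 by omega)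
  have hreal : (N:ℝ) * (2*(J1:ℝ)) + 4 ≤ (p:ℝ)*J1 + 6*J1 + 2*p := by exact_mod_cast hnat
  have h2 : ((s:ℝ) - 2) ≤ 3*(J1:ℝ) := by
    have : (s:ℝ) ≤ 3*(J1:ℝ) + 2 := by exact_mod_cast h3J1
    linarith
  have h3 : (p:ℝ) ≤ (s:ℝ)*s + 2*s := by
    have hps2 : (s+1)*(s+1) = s*s + 2*s + 1 := by ring
    have : p ≤ s*s + 2*s := by omega
    exact_mod_cast this
  have h4 : (40:ℝ) ≤ (s:ℝ) := by exact_mod_cast hs40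
  have key : (N:ℝ) * (2*(J1:ℝ)) ≤ ((p:ℝ)/2 + 5 * Real.sqrt p - 10) * (2*(J1:ℝ)) := by
    have h1 : 0 ≤ (Real.sqrt p - (s:ℝ)) * (J1:ℝ) :=
      mul_nonneg (by linarith) (le_of_lt hJ1pos)
    have hmul : 0 ≤ ((10:ℝ)*(s:ℝ) - 26) * (3*(J1:ℝ) - ((s:ℝ) - 2)) :=
      mul_nonneg (by linarith) (by linarith)
    nlinarith [sq_nonneg ((s:ℝ) - 40)]
  have := le_of_mul_le_mul_right key (by positivity)
  exact this

lemma cnt_ge_real (hp : 1616 ≤ p) (hodd : p % 2 = 1)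
    (R : Finset (ZMod p)) (hR1 : 1 ≤ R.card) (hR3 : R.card ≤ 3) :
    (p:ℝ)/2 - 5 * Real.sqrt p + 7 ≤
    ((Finset.univ.filter fun v : ZMod p =>
        ((∏ r ∈ R, (X - Polynomial.C r)).eval v) ^ (p/2) = 1).card : ℝ) := by
  classical
  have hp2 : 2 < p := by omega
  -- a nonsquare n
  obtain ⟨n, hn⟩ := FiniteField.exists_nonsquare (F := ZMod p)
    (by rw [ZMod.ringChar_zmod_n]; omega)
  have hn0 : n ≠ 0 := fun h => hn (h ▸ ⟨0, by simp⟩)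
  have hne : n ^ (p/2) = -1 := by
    rcases pow_half_eq_or hodd hn0 with h | h
    · exact absurd ((ZMod.euler_criterion p hn0).mpr h) hn
    · exact h
  set F : (ZMod p)[X] := ∏ r ∈ R, (X - Polynomial.C r) with hF
  set A := Finset.univ.filter (fun v : ZMod p => (F.eval v) ^ (p/2) = 1) with hA
  set B := Finset.univ.filter (fun v : ZMod p =>
    ((Polynomial.C n * F).eval v) ^ (p/2) = 1) with hB
  have hABdisj : Disjoint A B := by
    rw [Finset.disjoint_left]
    intro v hvA hvB
    rw [hA, Finset.mem_filter] at hvA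
    rw [hB, Finset.mem_filter] at hvB
    have : ((Polynomial.C n * F).eval v) ^ (p/2) = -1 := by
      rw [Polynomial.eval_mul, Polynomial.eval_C, mul_pow, hne, hvA.2, mul_one]
    rw [hvB.2] at this
    have h2 : ((2 : ℕ) : ZMod p) = 0 := by push_cast; linear_combination this
    rw [ZMod.natCast_eq_zero_iff] at h2
    have := Nat.le_of_dvd (by norm_num) h2
    omega
  have hABunion : A ∪ B = Finset.univ.filter (fun v : ZMod p => F.eval v ≠ 0) := by
    ext v
    simp only [hA, hB, Finset.mem_union, Finset.mem_filter, Finset.mem_univ, true_and]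
    constructor
    · rintro (h | h)
      · intro h0; rw [h0] at h; rw [zero_pow (by omega)] at h; exact one_ne_zero h.symm
      · intro h0
        rw [Polynomial.eval_mul, Polynomial.eval_C, h0, mul_zero, zero_pow (by omega)] at h
        exact one_ne_zero h.symm
    · intro h0
      rcases pow_half_eq_or hodd h0 with h | h
      · exact Or.inl h
      · refine Or.inr ?_
        rw [Polynomial.eval_mul, Polynomial.eval_C, mul_pow, hne, h]
        ring
  have hroots : Finset.univ.filter (fun v : ZMod p => F.eval v = 0) = R := by
    ext v
    simp only [Finset.mem_filter, Finset.mem_univ, true_and, hF]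
    rw [Polynomial.eval_prod, Finset.prod_eq_zero_iff]
    constructor
    · rintro ⟨r, hr, hvr⟩
      rw [Polynomial.eval_sub, Polynomial.eval_X, Polynomial.eval_C, sub_eq_zero] at hvr
      rwa [hvr]
    · intro hv
      exact ⟨v, hv, by simp⟩
  have hcardU : (Finset.univ.filter (fun v : ZMod p => F.eval v ≠ 0)).card = p - R.card := by
    have h1 := Finset.card_filter_add_card_filter_not
      (s := (Finset.univ : Finset (ZMod p))) (p := fun v => F.eval v = 0)
    rw [hroots] at h1
    have h2 : (Finset.univ : Finset (ZMod p)).card = p := by rw [Finset.card_univ, ZMod.card]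
    simp only [ne_eq]
    omega
  have hsum : A.card + B.card = p - R.card := by
    rw [← hcardU, ← hABunion, Finset.card_union_of_disjoint hABdisj]
  -- bound B via stepanov
  have hBle : (B.card : ℝ) ≤ p/2 + 5 * Real.sqrt p - 10 := by
    have := cnt_le_real hp hodd n hn0 R hR1 hR3
    rw [hB, hF]
    exact this
  have hcast : (A.card : ℝ) + B.card = p - R.card := by
    have h3 : R.card ≤ p := by omega
    exact_mod_cast hsum
  have hRle : (R.card : ℝ) ≤ 3 := by exact_mod_cast hR3
  have : (A.card : ℝ) ≥ p - 3 - (p/2 + 5*Real.sqrt p - 10) := by linarith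
  calc (p:ℝ)/2 - 5 * Real.sqrt p + 7 = (p:ℝ) - 3 - (p/2 + 5*Real.sqrt p - 10) := by ring
    _ ≤ (A.card : ℝ) := this
  


open Polynomial Finset

variable {p : ℕ} [Fact p.Prime]

/-- sign function -/
noncomputable def eta (p : ℕ) [Fact p.Prime] : ZMod p → ℤ :=
  fun u => if u ^ (p/2) = 1 then 1 else -1

lemma eta_mul (hodd : p % 2 = 1) {u w : ZMod p} (hu : u ≠ 0) (hw : w ≠ 0) :
    eta p (u * w) = eta p u * eta p w := by
  classical
  have hno : (-1 : ZMod p) ≠ 1 := by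
    intro h
    have h2 : ((2 : ℕ) : ZMod p) = 0 := by push_cast; linear_combination -h
    rw [ZMod.natCast_eq_zero_iff] at h2
    have := Nat.le_of_dvd (by norm_num) h2
    have := (Fact.out : p.Prime).two_le
    omega
  unfold eta
  by_cases h1 : u ^ (p/2) = 1 <;> by_cases h2 : w ^ (p/2) = 1
  · rw [if_pos h1, if_pos h2, if_pos (by rw [mul_pow, h1, h2, mul_one])]
    ring
  · have hw2 : w ^ (p/2) = -1 := (pow_half_eq_or hodd hw).resolve_left h2
    rw [if_pos h1, if_neg h2, if_neg (by rw [mul_pow, h1, hw2, one_mul]; exact hno)]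
    ring
  · have hu2 : u ^ (p/2) = -1 := (pow_half_eq_or hodd hu).resolve_left h1
    rw [if_neg h1, if_pos h2, if_neg (by rw [mul_pow, hu2, h2, mul_one]; exact hno)]
    ring
  · have hu2 : u ^ (p/2) = -1 := (pow_half_eq_or hodd hu).resolve_left h1
    have hw2 : w ^ (p/2) = -1 := (pow_half_eq_or hodd hw).resolve_left h2
    rw [if_neg h1, if_neg h2, if_pos (by rw [mul_pow, hu2, hw2]; ring)]
    ring

lemma eta_sum_eq (S : Finset (ZMod p)) (F : ZMod p → ZMod p) [DecidablePred fun v => (F v)^(p/2) = 1] :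
    (∑ v ∈ S, eta p (F v)) = 2 * ((S.filter fun v => (F v)^(p/2) = 1).card : ℤ) - S.card := by
  classical
  rw [← Finset.sum_filter_add_sum_filter_not S (fun v => (F v)^(p/2) = 1)]
  have h1 : ∑ v ∈ S.filter (fun v => (F v)^(p/2) = 1), eta p (F v)
      = ((S.filter fun v => (F v)^(p/2) = 1).card : ℤ) := by
    have hc : ∀ v ∈ S.filter (fun v => (F v)^(p/2) = 1), eta p (F v) = 1 :=
      fun v hv => by simp [eta, (Finset.mem_filter.mp hv).2]
    rw [Finset.sum_congr rfl hc, Finset.sum_const, nsmul_eq_mul, mul_one]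
  have h2 : ∑ v ∈ S.filter (fun v => ¬((F v)^(p/2) = 1)), eta p (F v)
      = -((S.filter fun v => ¬((F v)^(p/2) = 1)).card : ℤ) := by
    have hc : ∀ v ∈ S.filter (fun v => ¬((F v)^(p/2) = 1)), eta p (F v) = -1 :=
      fun v hv => by simp [eta, (Finset.mem_filter.mp hv).2]
    rw [Finset.sum_congr rfl hc, Finset.sum_const, nsmul_eq_mul, mul_neg_one]
  rw [h1, h2]
  have h3 := Finset.card_filter_add_card_filter_not
    (s := S) (p := fun v => (F v)^(p/2) = 1)
  have h4 : ((S.filter fun v => (F v)^(p/2) = 1).card : ℤ)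
      + ((S.filter fun v => ¬((F v)^(p/2) = 1)).card : ℤ) = (S.card : ℤ) := by
    exact_mod_cast h3
  linarith

section Triple

variable (x y z : ZMod p)

lemma card_triple (hxy : x ≠ y) (hxz : x ≠ z) (hyz : y ≠ z) :
    ({x, y, z} : Finset (ZMod p)).card = 3 := by
  rw [Finset.card_insert_of_notMem (by simp [hxy, hxz]),
    Finset.card_insert_of_notMem (by simp [hyz]), Finset.card_singleton]

lemma card_compl_triple (hxy : x ≠ y) (hxz : x ≠ z) (hyz : y ≠ z) :
    (({x, y, z} : Finset (ZMod p))ᶜ).card = p - 3 := by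
  rw [Finset.card_compl, card_triple x y z hxy hxz hyz]
  congr 1
  rw [Fintype.card_eq_nat_card, Nat.card_zmod]

lemma filter_restrict_bounds (P : ZMod p → Prop) [DecidablePred P] :
    ((Finset.univ.filter P).card : ℤ) - 3
      ≤ (((({x, y, z} : Finset (ZMod p))ᶜ).filter P).card : ℤ) ∧
    (((({x, y, z} : Finset (ZMod p))ᶜ).filter P).card : ℤ) ≤ ((Finset.univ.filter P).card : ℤ) := by
  classical
  constructor
  · have hsub : Finset.univ.filter P ⊆
        ((({x, y, z} : Finset (ZMod p))ᶜ).filter P) ∪ {x, y, z} := by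
      intro v hv
      rw [Finset.mem_union]
      by_cases hvin : v ∈ ({x, y, z} : Finset (ZMod p))
      · exact Or.inr hvin
      · exact Or.inl (Finset.mem_filter.mpr ⟨Finset.mem_compl.mpr hvin,
          (Finset.mem_filter.mp hv).2⟩)
    have h1 := Finset.card_le_card hsub
    have h2 := Finset.card_union_le ((({x, y, z} : Finset (ZMod p))ᶜ).filter P)
      ({x, y, z} : Finset (ZMod p))
    have h3 : ({x, y, z} : Finset (ZMod p)).card ≤ 3 := by
      apply le_trans (Finset.card_insert_le _ _)
      apply Nat.succ_le_succ
      apply le_trans (Finset.card_insert_le _ _)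
      simp
    push_cast
    have := le_trans h1 h2
    omega
  · exact_mod_cast Finset.card_le_card (fun v hv => Finset.mem_filter.mpr
      ⟨Finset.mem_univ v, (Finset.mem_filter.mp hv).2⟩)

lemma etaSum_prod_bound (hp : 1616 ≤ p) (hodd : p % 2 = 1)
    (hxy : x ≠ y) (hxz : x ≠ z) (hyz : y ≠ z)
    (R : Finset (ZMod p)) (hR1 : 1 ≤ R.card) (hR3 : R.card ≤ 3) :
    |(((∑ v ∈ (({x, y, z} : Finset (ZMod p))ᶜ), eta p (∏ r ∈ R, (v - r))) : ℤ) : ℝ)|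
      ≤ 10 * Real.sqrt p - 11 := by
  classical
  have hEV : ∀ v : ZMod p, (∏ r ∈ R, (v - r)) = (∏ r ∈ R, (X - Polynomial.C r)).eval v := by
    intro v
    rw [Polynomial.eval_prod]
    exact Finset.prod_congr rfl (fun r _ => by
      rw [Polynomial.eval_sub, Polynomial.eval_X, Polynomial.eval_C])
  set N := (Finset.univ.filter fun v : ZMod p =>
      ((∏ r ∈ R, (X - Polynomial.C r)).eval v) ^ (p/2) = 1).card with hN
  have hfiltereq : ∀ (S : Finset (ZMod p)),
      (S.filter fun v => (∏ r ∈ R, (v - r))^(p/2) = 1)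
      = (S.filter fun v => ((∏ r ∈ R, (X - Polynomial.C r)).eval v)^(p/2) = 1) := by
    intro S
    apply Finset.filter_congr
    intro v _
    rw [hEV v]
  have hid := eta_sum_eq (p := p) ((({x, y, z} : Finset (ZMod p))ᶜ))
    (fun v => ∏ r ∈ R, (v - r))
  rw [hfiltereq, card_compl_triple x y z hxy hxz hyz,
    Nat.cast_sub (show 3 ≤ p by omega)] at hid
  obtain ⟨hlo, hhi⟩ := filter_restrict_bounds x y z
    (fun v => ((∏ r ∈ R, (X - Polynomial.C r)).eval v)^(p/2) = 1)
  have hNle : (N:ℝ) ≤ p/2 + 5 * Real.sqrt p - 10 := by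
    have := cnt_le_real hp hodd (1 : ZMod p) one_ne_zero R hR1 hR3
    rw [Polynomial.C_1, one_mul] at this
    exact this
  have hNge : (p:ℝ)/2 - 5 * Real.sqrt p + 7 ≤ (N:ℝ) := cnt_ge_real hp hodd R hR1 hR3
  rw [← hN] at hlo hhi
  set M := (((({x, y, z} : Finset (ZMod p))ᶜ).filter fun v =>
      ((∏ r ∈ R, (X - Polynomial.C r)).eval v)^(p/2) = 1)).card with hM
  have hidR : ((∑ v ∈ (({x, y, z} : Finset (ZMod p))ᶜ), eta p (∏ r ∈ R, (v - r)) : ℤ) : ℝ)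
      = 2 * (M:ℝ) - ((p:ℝ) - 3) := by exact_mod_cast hid
  have hloR : (N:ℝ) - 3 ≤ (M:ℝ) := by exact_mod_cast hlo
  have hhiR : (M:ℝ) ≤ (N:ℝ) := by exact_mod_cast hhi
  rw [abs_le]
  constructor
  · rw [hidR]; linarith
  · rw [hidR]; linarith

lemma etaSum_single_bound (hodd : p % 2 = 1)
    (hxy : x ≠ y) (hxz : x ≠ z) (hyz : y ≠ z) (a : ZMod p) :
    |(∑ v ∈ (({x, y, z} : Finset (ZMod p))ᶜ), eta p (v - a) : ℤ)| ≤ 4 := by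
  classical
  have hid := eta_sum_eq (p := p) ((({x, y, z} : Finset (ZMod p))ᶜ)) (fun v => v - a)
  rw [card_compl_triple x y z hxy hxz hyz] at hid
  have hNval : (Finset.univ.filter fun v : ZMod p => (v - a)^(p/2) = 1).card = p / 2 := by
    have himg : (Finset.univ.filter fun v : ZMod p => (v - a)^(p/2) = 1)
        = (Finset.univ.filter fun u : ZMod p => u^(p/2) = 1).image (fun u => u + a) := by
      ext v
      simp only [Finset.mem_filter, Finset.mem_univ, true_and, Finset.mem_image]
      constructor
      · intro h
        exact ⟨v - a, h, by ring⟩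
      · rintro ⟨u, hu, rfl⟩
        simpa using hu
    rw [himg, Finset.card_image_of_injective _ (add_left_injective a),
      card_pow_half_one hodd]
  have hrb := filter_restrict_bounds x y z (fun v : ZMod p => (v - a)^(p/2) = 1)
  rw [hNval] at hrb
  have hp2 : 2 ≤ p := (Fact.out : p.Prime).two_le
  have h2p : (2 : ℤ) * ((p/2 : ℕ) : ℤ) = (p : ℤ) - 1 := by omega
  rw [abs_le]
  obtain ⟨hlo, hhi⟩ := hrb
  have hp3 : ((p - 3 : ℕ) : ℤ) = (p:ℤ) - 3 := by omega
  constructor <;> [skip; skip] <;> rw [hid, hp3] <;> omega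

end Triple



open Polynomial Finset

variable {p : ℕ} [Fact p.Prime]

set_option maxHeartbeats 1600000 in
lemma Tprime_bound (hp : 1616 ≤ p) (hodd : p % 2 = 1) (x y z : ZMod p)
    (hxy : x ≠ y) (hxz : x ≠ z) (hyz : y ≠ z) :
    (p:ℝ)/8 - 5 * Real.sqrt p - 1 ≤
      (((({x, y, z} : Finset (ZMod p))ᶜ).filter fun v =>
        (v-x)^(p/2) = 1 ∧ (v-y)^(p/2) = 1 ∧ ¬((v-z)^(p/2) = 1)).card : ℝ) := by
  classical
  set U := (({x, y, z} : Finset (ZMod p))ᶜ) with hU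
  set T' := (U.filter fun v =>
    (v-x)^(p/2) = 1 ∧ (v-y)^(p/2) = 1 ∧ ¬((v-z)^(p/2) = 1)) with hT'
  -- pointwise value of the signed product
  have hpt : ∀ v : ZMod p, (1 + eta p (v-x)) * (1 + eta p (v-y)) * (1 - eta p (v-z)) =
      if ((v-x)^(p/2) = 1 ∧ (v-y)^(p/2) = 1 ∧ ¬((v-z)^(p/2) = 1)) then 8 else 0 := by
    intro v
    by_cases h1 : (v-x)^(p/2) = 1 <;> by_cases h2 : (v-y)^(p/2) = 1 <;>
      by_cases h3 : (v-z)^(p/2) = 1 <;>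
      simp [eta, h1, h2, h3]
  have hid8 : (∑ v ∈ U, (1 + eta p (v-x)) * (1 + eta p (v-y)) * (1 - eta p (v-z)))
      = 8 * (T'.card : ℤ) := by
    rw [Finset.sum_congr rfl (fun v _ => hpt v), Finset.sum_ite, Finset.sum_const,
      Finset.sum_const, smul_zero, add_zero, nsmul_eq_mul, ← hT']
    ring
  -- expansion
  have hexp : ∀ v ∈ U, (1 + eta p (v-x)) * (1 + eta p (v-y)) * (1 - eta p (v-z))
      = 1 + eta p (v-x) + eta p (v-y) - eta p (v-z) + eta p ((v-x)*(v-y))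
        - eta p ((v-x)*(v-z)) - eta p ((v-y)*(v-z)) - eta p ((v-x)*((v-y)*(v-z))) := by
    intro v hv
    rw [hU, Finset.mem_compl] at hv
    simp only [Finset.mem_insert, Finset.mem_singleton] at hv
    push_neg at hv
    have hvx : v - x ≠ 0 := sub_ne_zero.mpr hv.1
    have hvy : v - y ≠ 0 := sub_ne_zero.mpr hv.2.1
    have hvz : v - z ≠ 0 := sub_ne_zero.mpr hv.2.2
    rw [eta_mul hodd hvx hvy, eta_mul hodd hvx hvz, eta_mul hodd hvy hvz,
      eta_mul hodd hvx (mul_ne_zero hvy hvz), eta_mul hodd hvy hvz]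
    ring
  have hsplit : (∑ v ∈ U, (1 + eta p (v-x)) * (1 + eta p (v-y)) * (1 - eta p (v-z)))
      = (U.card : ℤ) + (∑ v ∈ U, eta p (v-x)) + (∑ v ∈ U, eta p (v-y))
        - (∑ v ∈ U, eta p (v-z)) + (∑ v ∈ U, eta p ((v-x)*(v-y)))
        - (∑ v ∈ U, eta p ((v-x)*(v-z))) - (∑ v ∈ U, eta p ((v-y)*(v-z)))
        - (∑ v ∈ U, eta p ((v-x)*((v-y)*(v-z)))) := by
    rw [Finset.sum_congr rfl hexp]
    simp only [Finset.sum_add_distrib, Finset.sum_sub_distrib, Finset.sum_const,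
      nsmul_eq_mul, mul_one]
  -- rewrite pair/triple sums as products over finsets
  have hpair : ∀ (a b : ZMod p), a ≠ b → (∑ v ∈ U, eta p ((v-a)*(v-b)))
      = ∑ v ∈ U, eta p (∏ r ∈ ({a, b} : Finset (ZMod p)), (v - r)) := by
    intro a b hab
    apply Finset.sum_congr rfl
    intro v _
    rw [Finset.prod_pair hab]
  have htriple : (∑ v ∈ U, eta p ((v-x)*((v-y)*(v-z))))
      = ∑ v ∈ U, eta p (∏ r ∈ ({x, y, z} : Finset (ZMod p)), (v - r)) := by
    apply Finset.sum_congr rfl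
    intro v _
    rw [Finset.prod_insert (by simp [hxy, hxz]), Finset.prod_pair hyz]
  have hcard2 : ∀ (a b : ZMod p), a ≠ b → ({a, b} : Finset (ZMod p)).card = 2 := by
    intro a b hab
    rw [Finset.card_insert_of_notMem (by simp [hab]), Finset.card_singleton]
  have hcard3 : ({x, y, z} : Finset (ZMod p)).card = 3 := by
    rw [Finset.card_insert_of_notMem (by simp [hxy, hxz]),
      Finset.card_insert_of_notMem (by simp [hyz]), Finset.card_singleton]
  -- bounds
  have hb1 := etaSum_single_bound x y z hodd hxy hxz hyz x
  have hb2 := etaSum_single_bound x y z hodd hxy hxz hyz y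
  have hb3 := etaSum_single_bound x y z hodd hxy hxz hyz z
  have hb12 : |((∑ v ∈ U, eta p ((v-x)*(v-y)) : ℤ) : ℝ)| ≤ 10 * Real.sqrt p - 11 := by
    rw [hpair x y hxy]
    exact etaSum_prod_bound x y z hp hodd hxy hxz hyz _ (by rw [hcard2 x y hxy]; omega)
      (by rw [hcard2 x y hxy]; omega)
  have hb13 : |((∑ v ∈ U, eta p ((v-x)*(v-z)) : ℤ) : ℝ)| ≤ 10 * Real.sqrt p - 11 := by
    rw [hpair x z hxz]
    exact etaSum_prod_bound x y z hp hodd hxy hxz hyz _ (by rw [hcard2 x z hxz]; omega)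
      (by rw [hcard2 x z hxz]; omega)
  have hb23 : |((∑ v ∈ U, eta p ((v-y)*(v-z)) : ℤ) : ℝ)| ≤ 10 * Real.sqrt p - 11 := by
    rw [hpair y z hyz]
    exact etaSum_prod_bound x y z hp hodd hxy hxz hyz _ (by rw [hcard2 y z hyz]; omega)
      (by rw [hcard2 y z hyz]; omega)
  have hb123 : |((∑ v ∈ U, eta p ((v-x)*((v-y)*(v-z))) : ℤ) : ℝ)| ≤ 10 * Real.sqrt p - 11 := by
    rw [htriple]
    exact etaSum_prod_bound x y z hp hodd hxy hxz hyz _ (by rw [hcard3]; omega)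
      (by rw [hcard3])
  have hUcard : (U.card : ℤ) = (p:ℤ) - 3 := by
    rw [hU, card_compl_triple x y z hxy hxz hyz]
    omega
  -- combine in ℝ
  have hZ : (8:ℤ) * (T'.card : ℤ) = (U.card : ℤ)
      + (∑ v ∈ U, eta p (v-x)) + (∑ v ∈ U, eta p (v-y))
      - (∑ v ∈ U, eta p (v-z)) + (∑ v ∈ U, eta p ((v-x)*(v-y)))
      - (∑ v ∈ U, eta p ((v-x)*(v-z))) - (∑ v ∈ U, eta p ((v-y)*(v-z)))
      - (∑ v ∈ U, eta p ((v-x)*((v-y)*(v-z)))) := by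
    rw [← hid8, hsplit]
  have hkey : 8 * ((T'.card : ℤ) : ℝ) = ((U.card : ℤ) : ℝ)
      + ((∑ v ∈ U, eta p (v-x) : ℤ) : ℝ) + ((∑ v ∈ U, eta p (v-y) : ℤ) : ℝ)
      - ((∑ v ∈ U, eta p (v-z) : ℤ) : ℝ) + ((∑ v ∈ U, eta p ((v-x)*(v-y)) : ℤ) : ℝ)
      - ((∑ v ∈ U, eta p ((v-x)*(v-z)) : ℤ) : ℝ) - ((∑ v ∈ U, eta p ((v-y)*(v-z)) : ℤ) : ℝ)
      - ((∑ v ∈ U, eta p ((v-x)*((v-y)*(v-z))) : ℤ) : ℝ) := by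
    exact_mod_cast congrArg (Int.cast : ℤ → ℝ) hZ
  have hUr : ((U.card : ℤ) : ℝ) = (p:ℝ) - 3 := by rw [hUcard]; push_cast; ring
  have hb1' : |((∑ v ∈ U, eta p (v-x) : ℤ) : ℝ)| ≤ 4 := by exact_mod_cast hb1
  have hb2' : |((∑ v ∈ U, eta p (v-y) : ℤ) : ℝ)| ≤ 4 := by exact_mod_cast hb2
  have hb3' : |((∑ v ∈ U, eta p (v-z) : ℤ) : ℝ)| ≤ 4 := by exact_mod_cast hb3
  rw [abs_le] at hb1' hb2' hb3' hb12 hb13 hb23 hb123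
  have hcast : ((T'.card : ℤ) : ℝ) = (T'.card : ℝ) := by push_cast; ring
  rw [hcast] at hkey
  rw [hUr] at hkey
  linarith [hb1'.1, hb1'.2, hb2'.1, hb2'.2, hb3'.1, hb3'.2, hb12.1, hb12.2,
    hb13.1, hb13.2, hb23.1, hb23.2, hb123.1, hb123.2]


end PaleySt

theorem stmt_8 (p : ℕ) [Fact p.Prime] (hp4 : p % 4 = 1)
    (x y z : ZMod p) (hxy : x ≠ y) (hxz : x ≠ z) (hyz : y ≠ z) :
    (p : ℝ) / 8 - 5 * Real.sqrt p - 1 ≤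
      (((((paley p).neighborSet x ∩ (paley p).neighborSet y) \
          (paley p).neighborSet z).ncard : ℝ)) ∧
    (1711 ≤ p →
      (((paley p).neighborSet x ∩ (paley p).neighborSet y) \
        (paley p).neighborSet z).Nonempty) := by
  classical
  have hp2 : 2 ≤ p := (Fact.out : p.Prime).two_le
  have hodd : p % 2 = 1 := by omega
  set Sset := ((((paley p).neighborSet x ∩ (paley p).neighborSet y) \
      (paley p).neighborSet z)) with hSset
  have hfin : Sset.Finite := Set.toFinite _
  have hsqneg : IsSquare (-1 : ZMod p) := (ZMod.exists_sq_eq_neg_one_iff).mpr (by omega)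
  have hmain : (p:ℝ)/8 - 5*Real.sqrt p - 1 ≤ (Sset.ncard : ℝ) := by
    by_cases hsmall : p ≤ 1615
    · have hple : (p:ℝ) ≤ 1615 := by exact_mod_cast hsmall
      have hpge : (2:ℝ) ≤ (p:ℝ) := by exact_mod_cast hp2
      have h40 : (p:ℝ) - 8 ≤ 40*Real.sqrt p := by
        by_cases h8 : (p:ℝ) ≤ 8
        · have := Real.sqrt_nonneg (p:ℝ); linarith
        · push_neg at h8
          have hs : ((p:ℝ)-8)/40 ≤ Real.sqrt p := by
            rw [Real.le_sqrt (by linarith) (by linarith)]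
            nlinarith
          linarith
      have h1 : (0:ℝ) ≤ (Sset.ncard : ℝ) := Nat.cast_nonneg _
      linarith
    · push_neg at hsmall
      have hp1616 : 1616 ≤ p := by omega
      have hT := PaleySt.Tprime_bound hp1616 hodd x y z hxy hxz hyz
      set T' := ((({x, y, z} : Finset (ZMod p))ᶜ).filter fun v =>
        (v-x)^(p/2) = 1 ∧ (v-y)^(p/2) = 1 ∧ ¬((v-z)^(p/2) = 1)) with hT'def
      have hsub : (T' : Set (ZMod p)) ⊆ Sset := by
        intro v hv
        have hv' := Finset.mem_coe.mp hv
        rw [hT'def, Finset.mem_filter, Finset.mem_compl] at hv'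
        obtain ⟨hvnot, h1, h2, h3⟩ := hv'
        simp only [Finset.mem_insert, Finset.mem_singleton] at hvnot
        push_neg at hvnot
        obtain ⟨hvx, hvy, hvz⟩ := hvnot
        have hvx0 : v - x ≠ 0 := sub_ne_zero.mpr hvx
        have hvy0 : v - y ≠ 0 := sub_ne_zero.mpr hvy
        have hvz0 : v - z ≠ 0 := sub_ne_zero.mpr hvz
        have hsx : IsSquare (v - x) := (ZMod.euler_criterion p hvx0).mpr h1
        have hsy : IsSquare (v - y) := (ZMod.euler_criterion p hvy0).mpr h2
        have hnsz : ¬ IsSquare (v - z) := fun hs => h3 ((ZMod.euler_criterion p hvz0).mp hs)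
        refine ⟨⟨?_, ?_⟩, ?_⟩
        · rw [SimpleGraph.mem_neighborSet]
          refine ⟨fun h => hvx h.symm, ?_, hsx⟩
          have he : x - v = (-1) * (v - x) := by ring
          rw [he]
          exact hsqneg.mul hsx
        · rw [SimpleGraph.mem_neighborSet]
          refine ⟨fun h => hvy h.symm, ?_, hsy⟩
          have he : y - v = (-1) * (v - y) := by ring
          rw [he]
          exact hsqneg.mul hsy
        · intro hadj
          rw [SimpleGraph.mem_neighborSet] at hadj
          exact hnsz hadj.2.2
      have hcard : (T'.card : ℝ) ≤ (Sset.ncard : ℝ) := by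
        have := Set.ncard_le_ncard hsub hfin
        rw [Set.ncard_coe_finset] at this
        exact_mod_cast this
      linarith
  refine ⟨hmain, ?_⟩
  intro h1711
  have hpos : (0:ℝ) < (p:ℝ)/8 - 5*Real.sqrt p - 1 := by
    have hpr : (1711:ℝ) ≤ (p:ℝ) := by exact_mod_cast h1711
    have h41 : (41:ℝ) < Real.sqrt p := by
      rw [show (41:ℝ) = Real.sqrt (41^2) by rw [Real.sqrt_sq (by norm_num)]]
      apply Real.sqrt_lt_sqrt (by norm_num)
      nlinarith
    have hsq : Real.sqrt p * Real.sqrt p = (p:ℝ) := Real.mul_self_sqrt (by positivity)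
    nlinarith
  have hne : Sset.ncard ≠ 0 := by
    intro h0
    rw [h0] at hmain
    simp only [Nat.cast_zero] at hmain
    linarith
  exact Set.nonempty_of_ncard_ne_zero hne
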